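/- Let λ ∈ ℝ^n with all entries positive, λ_1 the largest entry, and 1 ≤ l < n. Then for each i ≠ 1: λ_1 · (S_{n-2;1i}(λ) · S_l(λ) − S_n(λ) · S_{l-2;1i}(λ)) = S_{n-1;i}(λ) · S_{l;i}(λ) + S_n(λ) · S_{l-1;1i}(λ). -/

import Mathlib

open Finset

/-- `S m lam` : the `m`-th elementary symmetric function of the entries of `lam`,
with the conventions `S 0 = 1` and `S m = 0` for `m < 0` (and for `m > n`). -/
noncomputable def S {n : ℕ} (m : ℤ) (lam : Fin n → ℝ) : ℝ :=
  if 0 ≤ m then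
    ∑ A ∈ Finset.powersetCard m.toNat (Finset.univ : Finset (Fin n)), ∏ j ∈ A, lam j
  else 0

/-- helper: natural-indexed elementary symmetric sum -/
noncomputable def e {n : ℕ} (k : ℕ) (lam : Fin n → ℝ) : ℝ :=
  ∑ A ∈ Finset.powersetCard k (Finset.univ : Finset (Fin n)), ∏ j ∈ A, lam j

lemma S_ofNat {n : ℕ} (k : ℕ) (lam : Fin n → ℝ) : S (k : ℤ) lam = e k lam := by
  simp [S, e]

lemma e_update {n : ℕ} (k : ℕ) (lam : Fin n → ℝ) (i : Fin n) :
    e k (Function.update lam i 0) =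
      ∑ A ∈ Finset.powersetCard k (Finset.univ.erase i), ∏ j ∈ A, lam j := by
  unfold e
  rw [← Finset.sum_subset (Finset.powersetCard_mono (Finset.erase_subset i Finset.univ))]
  · apply Finset.sum_congr rfl
    intro A hA
    apply Finset.prod_congr rfl
    intro j hj
    have hAi : A ⊆ Finset.univ.erase i := (Finset.mem_powersetCard.mp hA).1
    have : j ≠ i := Finset.ne_of_mem_erase (hAi hj)
    simp [Function.update_of_ne this]
  · intro A hA hA'
    have hiA : i ∈ A := by
      by_contra hiA
      exact hA' (Finset.mem_powersetCard.mpr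
        ⟨fun x hx => Finset.mem_erase.mpr ⟨fun h => hiA (h ▸ hx), Finset.mem_univ x⟩,
          (Finset.mem_powersetCard.mp hA).2⟩)
    exact Finset.prod_eq_zero hiA (by simp)

lemma e_rec {n : ℕ} (k : ℕ) (lam : Fin n → ℝ) (i : Fin n) :
    e (k + 1) lam = e (k + 1) (Function.update lam i 0)
      + lam i * e k (Function.update lam i 0) := by
  rw [e_update, e_update]
  unfold e
  have huniv : (Finset.univ : Finset (Fin n)) = insert i (Finset.univ.erase i) :=
    (Finset.insert_erase (Finset.mem_univ i)).symm
  conv_lhs => rw [huniv]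
  rw [Finset.powersetCard_succ_insert (Finset.notMem_erase i _)]
  rw [Finset.sum_union]
  · congr 1
    rw [Finset.sum_image]
    · rw [Finset.mul_sum]
      apply Finset.sum_congr rfl
      intro B hB
      have hiB : i ∉ B := fun h =>
        Finset.notMem_erase i _ ((Finset.mem_powersetCard.mp hB).1 h)
      rw [Finset.prod_insert hiB]
    · intro B hB C hC hBC
      have hiB : i ∉ B := fun h =>
        Finset.notMem_erase i _ ((Finset.mem_powersetCard.mp hB).1 h)
      have hiC : i ∉ C := fun h =>
        Finset.notMem_erase i _ ((Finset.mem_powersetCard.mp hC).1 h)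
      have := congrArg (fun s => Finset.erase s i) hBC
      simpa [Finset.erase_insert hiB, Finset.erase_insert hiC] using this
  · rw [Finset.disjoint_left]
    intro A hA hA'
    obtain ⟨B, hB, rfl⟩ := Finset.mem_image.mp hA'
    have : i ∈ Finset.univ.erase i :=
      (Finset.mem_powersetCard.mp hA).1 (Finset.mem_insert_self i B)
    exact Finset.notMem_erase i _ this

lemma S_rec {n : ℕ} (l : ℤ) (lam : Fin n → ℝ) (i : Fin n) :
    S l lam = S l (Function.update lam i 0)
      + lam i * S (l - 1) (Function.update lam i 0) := by
  rcases lt_trichotomy l 0 with h | h | h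
  · have h1 : l - 1 < 0 := by omega
    simp [S, not_le.mpr h, not_le.mpr h1]
    intro h2; omega
  · subst h
    simp [S]
  · have h1 : 1 ≤ l := h
    obtain ⟨k, hk⟩ : ∃ k : ℕ, l = (k : ℤ) + 1 := ⟨(l - 1).toNat, by omega⟩
    subst hk
    have h2 : ((k : ℤ) + 1) = ((k + 1 : ℕ) : ℤ) := by push_cast; ring
    have h3 : ((k : ℤ) + 1 - 1) = ((k : ℕ) : ℤ) := by ring
    rw [h3, h2, S_ofNat, S_ofNat, S_ofNat, e_rec]

theorem stmt8 (m : ℕ) (lam : Fin (m + 2) → ℝ) (hpos : ∀ j, 0 < lam j)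
    (hmax : ∀ j, lam j ≤ lam 0) (l : ℤ) (hl1 : 1 ≤ l) (hln : l < m + 2)
    (i : Fin (m + 2)) (hi : i ≠ 0) :
    lam 0 * (S (m : ℤ) (Function.update (Function.update lam 0 0) i 0) * S l lam
        - S ((m : ℤ) + 2) lam * S (l - 2) (Function.update (Function.update lam 0 0) i 0))
      = S ((m : ℤ) + 1) (Function.update lam i 0) * S l (Function.update lam i 0)
        + S ((m : ℤ) + 2) lam
          * S (l - 1) (Function.update (Function.update lam 0 0) i 0) := by
  set μ := Function.update lam i 0 with hμ
  set ν := Function.update (Function.update lam 0 0) i 0 with hν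
  have hcomm : Function.update μ 0 0 = ν := by
    rw [hμ, hν, Function.update_comm hi]
  have hμ0 : μ 0 = lam 0 := Function.update_of_ne (Ne.symm hi) _ _
  -- vanishing: e (m+2) μ = 0
  have hv1 : e (m + 2) μ = 0 := by
    rw [hμ, e_update]
    have : Finset.powersetCard (m + 2) ((Finset.univ : Finset (Fin (m+2))).erase i) = ∅ := by
      rw [Finset.powersetCard_eq_empty]
      rw [Finset.card_erase_of_mem (Finset.mem_univ i)]
      simp
    simp [this]
  -- vanishing: e (m+1) ν = 0
  have hv2 : e (m + 1) ν = 0 := by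
    rw [hν, e_update]
    have hcard : ((Finset.univ : Finset (Fin (m+2))).erase i).card = m + 1 := by
      rw [Finset.card_erase_of_mem (Finset.mem_univ i)]
      simp
    have hps : Finset.powersetCard (m + 1) ((Finset.univ : Finset (Fin (m+2))).erase i)
        = {(Finset.univ : Finset (Fin (m+2))).erase i} := by
      rw [← hcard]; exact Finset.powersetCard_self _
    rw [hps, Finset.sum_singleton]
    apply Finset.prod_eq_zero (i := (0 : Fin (m+2)))
    · exact Finset.mem_erase.mpr ⟨Ne.symm hi, Finset.mem_univ 0⟩
    · simp
  have c1 : ((m : ℤ) + 1) = ((m + 1 : ℕ) : ℤ) := by push_cast; ring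
  have c2 : ((m : ℤ) + 2) = ((m + 2 : ℕ) : ℤ) := by push_cast; ring
  -- A : S (m+2) lam = lam i * S (m+1) μ
  have hA : S ((m : ℤ) + 2) lam = lam i * S ((m : ℤ) + 1) μ := by
    have h := e_rec (m + 1) lam i
    simp only [show m + 1 + 1 = m + 2 from rfl] at h
    rw [← hμ] at h
    rw [hv1] at h
    rw [c1, c2, S_ofNat, S_ofNat, h]
    ring
  -- B : S (m+1) μ = lam 0 * S m ν
  have hB : S ((m : ℤ) + 1) μ = lam 0 * S (m : ℤ) ν := by
    have h := e_rec m μ 0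
    rw [hcomm, hv2, hμ0] at h
    rw [c1, S_ofNat, S_ofNat, h]
    ring
  have hC : S l lam = S l μ + lam i * S (l - 1) μ := S_rec l lam i
  have hD : S l μ = S l ν + lam 0 * S (l - 1) ν := by
    have := S_rec l μ 0
    rwa [hcomm, hμ0] at this
  have hE : S (l - 1) μ = S (l - 1) ν + lam 0 * S (l - 2) ν := by
    have := S_rec (l - 1) μ 0
    rw [hcomm, hμ0] at this
    rwa [show l - 1 - 1 = l - 2 by ring] at this
  rw [hA, hB, hC, hD, hE]
  ring
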